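/- Let m ≥ 1, let C be a nonzero real number, and let λ_1, …, λ_m be real numbers with 1 ≤ λ_1 < λ_2 < ⋯ < λ_m. For each integer n ≥ 1 define P_n(z) = Cⁿ · z^{−m} · ∏_{j=1}^m (z − λ_jⁿ)(z − λ_j^{−n}) for z ∈ ℂ∖{0}. Fix i ∈ {1,…,m} and a real number u with λ_i < u, and additionally u < λ_{i+1} in case i < m. Then lim_{n→∞} (1/n)·log|P_n(−uⁿ)| = log|C| + i·log u + ∑_{j=i+1}^m log λ_j. -/

import Mathlib

open BigOperators Filter

theorem key_aux (a b : ℝ) (ha : 0 < a) (hb : 0 ≤ b) (hba : b < a) :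
    Tendsto (fun n : ℕ => (1 / (n : ℝ)) * Real.log (a ^ n + b ^ n)) atTop
      (nhds (Real.log a)) := by
  have h1 : Tendsto (fun n : ℕ => (b / a) ^ n) atTop (nhds 0) :=
    tendsto_pow_atTop_nhds_zero_of_lt_one (by positivity) ((div_lt_one ha).2 hba)
  have h2 : Tendsto (fun n : ℕ => Real.log (1 + (b / a) ^ n)) atTop (nhds 0) := by
    have := (Real.continuousAt_log (by norm_num : (1:ℝ) + 0 ≠ 0)).tendsto.comp
      (tendsto_const_nhds.add h1)
    simpa [Function.comp_def] using this
  have h3 : Tendsto (fun n : ℕ => (1 / (n : ℝ)) * Real.log (1 + (b / a) ^ n)) atTop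
      (nhds 0) := by
    simpa using tendsto_one_div_atTop_nhds_zero_nat.mul h2
  have h4 := Tendsto.add (tendsto_const_nhds (α := ℕ) (f := atTop) (x := Real.log a)) h3
  rw [add_zero] at h4
  refine h4.congr' ?_
  filter_upwards [eventually_ge_atTop 1] with n hn
  have hn' : (n : ℝ) ≠ 0 := Nat.cast_ne_zero.2 (by omega)
  have hpos : 0 < 1 + (b / a) ^ n := by positivity
  have : a ^ n + b ^ n = a ^ n * (1 + (b / a) ^ n) := by
    rw [mul_add, mul_one, div_pow, mul_div_cancel₀ _ (pow_ne_zero n ha.ne')]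
  rw [this, Real.log_mul (by positivity) (ne_of_gt hpos), Real.log_pow]
  field_simp

theorem stmt_12 (m : ℕ) (hm : 1 ≤ m) (C : ℝ) (hC : C ≠ 0)
    (lam : ℕ → ℝ) (h1 : 1 ≤ lam 1) (hmono : StrictMonoOn lam (Set.Icc 1 m))
    (i : ℕ) (hi1 : 1 ≤ i) (him : i ≤ m)
    (u : ℝ) (hu : lam i < u) (hu' : i < m → u < lam (i + 1)) :
    Filter.Tendsto
      (fun n : ℕ => (1 / (n : ℝ)) *
        Real.log |C ^ n * (-(u ^ n)) ^ (-(m : ℤ)) *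
          ∏ j ∈ Finset.Icc 1 m, ((-(u ^ n)) - lam j ^ n) * ((-(u ^ n)) - ((lam j)⁻¹) ^ n)|)
      Filter.atTop
      (nhds (Real.log |C| + (i : ℝ) * Real.log u
        + ∑ j ∈ Finset.Icc (i + 1) m, Real.log (lam j))) := by
  have hmonoOn := hmono.monotoneOn
  have hlam1 : ∀ j ∈ Finset.Icc 1 m, 1 ≤ lam j := by
    intro j hj
    simp only [Finset.mem_Icc] at hj
    exact h1.trans (hmonoOn (by simpa using hm) (by simp [hj.1, hj.2]) hj.1)
  have hu1 : 1 < u := lt_of_le_of_lt (hlam1 i (by simp [hi1, him])) hu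
  have hu0 : 0 < u := lt_trans one_pos hu1
  set L : ℕ → ℝ := fun j => (if j ≤ i then Real.log u else Real.log (lam j)) + Real.log u
    with hLdef
  -- per-term limits
  have hL : ∀ j ∈ Finset.Icc 1 m, Tendsto
      (fun n : ℕ => (1 / (n : ℝ)) * Real.log (u ^ n + lam j ^ n)
        + (1 / (n : ℝ)) * Real.log (u ^ n + ((lam j)⁻¹) ^ n)) atTop (nhds (L j)) := by
    intro j hj
    simp only [Finset.mem_Icc] at hj
    have hlj : 1 ≤ lam j := hlam1 j (by simp [hj.1, hj.2])
    have hB : Tendsto (fun n : ℕ => (1 / (n : ℝ)) * Real.log (u ^ n + ((lam j)⁻¹) ^ n))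
        atTop (nhds (Real.log u)) := by
      refine key_aux u (lam j)⁻¹ hu0 (by positivity) ?_
      exact lt_of_le_of_lt (inv_le_one_of_one_le₀ hlj) hu1
    by_cases hji : j ≤ i
    · have hlju : lam j < u := by
        rcases eq_or_lt_of_le hji with h | h
        · exact h ▸ hu
        · exact lt_trans (hmono (by simp [hj.1, hj.2]) (by simp [hi1, him]) h) hu
      have hA := key_aux u (lam j) hu0 (by linarith) hlju
      simpa [hLdef, hji] using hA.add hB
    · push_neg at hji
      have him' : i < m := lt_of_lt_of_le hji hj.2
      have hulj : u < lam j := by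
        rcases eq_or_lt_of_le (Nat.succ_le_of_lt hji) with h | h
        · exact h ▸ hu' him'
        · exact lt_trans (hu' him')
            (hmono (by simp; omega) (by simp [hj.1, hj.2]) h)
      have hA := key_aux (lam j) u (by linarith) (le_of_lt hu0) hulj
      have hA' : Tendsto (fun n : ℕ => (1 / (n : ℝ)) * Real.log (u ^ n + lam j ^ n))
          atTop (nhds (Real.log (lam j))) := by simpa [add_comm] using hA
      have : ¬ j ≤ i := by omega
      simpa [hLdef, this] using hA'.add hB
  have hsum := tendsto_finset_sum (Finset.Icc 1 m) hL
  have hmain := Tendsto.add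
    (tendsto_const_nhds (α := ℕ) (f := atTop)
      (x := Real.log |C| + (-(m : ℝ)) * Real.log u)) hsum
  -- eventual equality of the functions
  have heq : ∀ᶠ n : ℕ in atTop,
      Real.log |C| + (-(m : ℝ)) * Real.log u
        + ∑ j ∈ Finset.Icc 1 m, ((1 / (n : ℝ)) * Real.log (u ^ n + lam j ^ n)
            + (1 / (n : ℝ)) * Real.log (u ^ n + ((lam j)⁻¹) ^ n))
      = (1 / (n : ℝ)) * Real.log |C ^ n * (-(u ^ n)) ^ (-(m : ℤ)) *
          ∏ j ∈ Finset.Icc 1 m, ((-(u ^ n)) - lam j ^ n) * ((-(u ^ n)) - ((lam j)⁻¹) ^ n)| := by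
    filter_upwards [eventually_ge_atTop 1] with n hn
    have hn' : (n : ℝ) ≠ 0 := Nat.cast_ne_zero.2 (by omega)
    have hApos : ∀ j ∈ Finset.Icc 1 m, 0 < u ^ n + lam j ^ n := by
      intro j hj
      have := hlam1 j hj
      positivity
    have hBpos : ∀ j ∈ Finset.Icc 1 m, 0 < u ^ n + ((lam j)⁻¹) ^ n := by
      intro j hj
      have h0 : 0 < lam j := lt_of_lt_of_le one_pos (hlam1 j hj)
      positivity
    have hprod : (∏ j ∈ Finset.Icc 1 m, ((-(u ^ n)) - lam j ^ n) * ((-(u ^ n)) - ((lam j)⁻¹) ^ n))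
        = ∏ j ∈ Finset.Icc 1 m, (u ^ n + lam j ^ n) * (u ^ n + ((lam j)⁻¹) ^ n) :=
      Finset.prod_congr rfl fun j _ => by ring
    have hppos : 0 < ∏ j ∈ Finset.Icc 1 m, (u ^ n + lam j ^ n) * (u ^ n + ((lam j)⁻¹) ^ n) :=
      Finset.prod_pos fun j hj => mul_pos (hApos j hj) (hBpos j hj)
    have habs : |C ^ n * (-(u ^ n)) ^ (-(m : ℤ)) *
          ∏ j ∈ Finset.Icc 1 m, ((-(u ^ n)) - lam j ^ n) * ((-(u ^ n)) - ((lam j)⁻¹) ^ n)|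
        = |C| ^ n * (u ^ n) ^ (-(m : ℤ)) *
          ∏ j ∈ Finset.Icc 1 m, (u ^ n + lam j ^ n) * (u ^ n + ((lam j)⁻¹) ^ n) := by
      have hz : |(-(u ^ n)) ^ (-(m : ℤ))| = (u ^ n) ^ (-(m : ℤ)) := by
        rw [zpow_neg, abs_inv, zpow_neg, zpow_natCast, zpow_natCast, abs_pow, abs_neg,
          abs_of_pos (by positivity : (0:ℝ) < u ^ n)]
      rw [abs_mul, abs_mul, abs_pow, hz, hprod, abs_of_pos hppos]
    rw [habs]
    rw [Real.log_mul (by positivity) (ne_of_gt hppos),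
      Real.log_mul (by positivity) (by positivity),
      Real.log_pow, Real.log_zpow, Real.log_pow,
      Real.log_prod (fun j hj => ne_of_gt (mul_pos (hApos j hj) (hBpos j hj)))]
    have hlogs : ∀ j ∈ Finset.Icc 1 m,
        Real.log ((u ^ n + lam j ^ n) * (u ^ n + ((lam j)⁻¹) ^ n))
          = Real.log (u ^ n + lam j ^ n) + Real.log (u ^ n + ((lam j)⁻¹) ^ n) :=
      fun j hj => Real.log_mul (ne_of_gt (hApos j hj)) (ne_of_gt (hBpos j hj))
    rw [Finset.sum_congr rfl hlogs]
    rw [mul_add, mul_add, Finset.mul_sum]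
    push_cast
    have e1 : (1 / (n : ℝ)) * ((n : ℝ) * Real.log |C|) = Real.log |C| := by
      field_simp
    have e2 : (1 / (n : ℝ)) * (-(m : ℝ) * ((n : ℝ) * Real.log u)) = -(m : ℝ) * Real.log u := by
      field_simp
    rw [e1, e2]
    congr 1
    exact Finset.sum_congr rfl fun j _ => by ring
  have := hmain.congr' heq
  convert this using 2
  -- arithmetic identity for the limit values
  have hsplit : ∑ j ∈ Finset.Icc 1 m, L j
      = ∑ j ∈ Finset.Icc 1 i, L j + ∑ j ∈ Finset.Icc (i + 1) m, L j := by
    have h := (Finset.sum_Ioc_consecutive L (Nat.zero_le i) him).symm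
    simpa only [← Finset.Icc_add_one_left_eq_Ioc, Nat.succ_eq_add_one, Nat.zero_add] using h
  have hc1 : ∀ j ∈ Finset.Icc 1 i, L j = Real.log u + Real.log u := by
    intro j hj
    simp only [Finset.mem_Icc] at hj
    simp [hLdef, hj.2]
  have hc2 : ∀ j ∈ Finset.Icc (i + 1) m, L j = Real.log (lam j) + Real.log u := by
    intro j hj
    simp only [Finset.mem_Icc] at hj
    have : ¬ j ≤ i := by omega
    simp [hLdef, this]
  have hs1 : ∑ j ∈ Finset.Icc 1 i, L j = (i : ℝ) * (Real.log u + Real.log u) := by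
    rw [Finset.sum_congr rfl hc1, Finset.sum_const, Nat.card_Icc, nsmul_eq_mul]
    simp
  have hs2 : ∑ j ∈ Finset.Icc (i + 1) m, L j
      = (∑ j ∈ Finset.Icc (i + 1) m, Real.log (lam j)) + ((m : ℝ) - (i : ℝ)) * Real.log u := by
    rw [Finset.sum_congr rfl hc2, Finset.sum_add_distrib, Finset.sum_const, Nat.card_Icc,
      nsmul_eq_mul]
    congr 1
    have hcard : (m + 1 - (i + 1) : ℕ) = m - i := by omega
    rw [hcard, Nat.cast_sub him]
  rw [hsplit, hs1, hs2]
  ring
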